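/- arXiv:1603.00254 — 5 statements merged into one kernel-verified Lean document; each statement's English description precedes it below -/
import Mathlib

section
/- If G is a graph on n vertices with maximum degree at most n/4, then G is switching-minimal. -/
open SimpleGraph Finset

variable {V : Type*}

/-- The Seidel switch of a graph `G` on the vertex set `A`: pairs with exactly one
endpoint in `A` have their adjacency complemented. -/
def Seidel (G : SimpleGraph V) (A : Finset V) : SimpleGraph V where
  Adj x y := x ≠ y ∧ (G.Adj x y ↔ (x ∈ A ↔ y ∈ A))
  symm := by
    constructor
    rintro x y ⟨hne, h⟩
    exact ⟨hne.symm, (G.adj_comm y x).trans (h.trans Iff.comm)⟩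
  loopless := by
    constructor
    rintro x ⟨hne, _⟩
    exact hne rfl

instance Seidel.decidableAdj [DecidableEq V] (G : SimpleGraph V) [DecidableRel G.Adj]
    (A : Finset V) : DecidableRel (Seidel G A).Adj := fun x y => by
  unfold Seidel
  infer_instance

/-- `eCross G A` is the number of edges of `G` with exactly one endpoint in `A`. -/
def eCross [Fintype V] [DecidableEq V] (G : SimpleGraph V) [DecidableRel G.Adj]
    (A : Finset V) : ℕ :=
  (G.edgeFinset.filter (fun e => ∃ x ∈ A, ∃ y, y ∉ A ∧ e = s(x, y))).card

/-- `G` is switching-minimal if no switch of `G` has fewer edges than `G`. -/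
def SwitchMinimal [Fintype V] [DecidableEq V] (G : SimpleGraph V) [DecidableRel G.Adj] : Prop :=
  ∀ A : Finset V, G.edgeFinset.card ≤ (Seidel G A).edgeFinset.card

theorem switchMinimal_of_maxDegree_le [Fintype V] [DecidableEq V]
    (G : SimpleGraph V) [DecidableRel G.Adj]
    (h : ∀ v : V, 4 * G.degree v ≤ Fintype.card V) :
    SwitchMinimal G := by

  classical
  intro A
  set P : Finset (Sym2 V) := (A ×ˢ Aᶜ).image (fun p => s(p.1, p.2)) with hP
  have hmemP : ∀ x y : V, s(x, y) ∈ P ↔ ((x ∈ A ∧ y ∉ A) ∨ (y ∈ A ∧ x ∉ A)) := by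
    intro x y
    simp only [hP, Finset.mem_image, Finset.mem_product, Finset.mem_compl, Prod.exists]
    constructor
    · rintro ⟨a, b, ⟨ha, hb⟩, hab⟩
      rw [Sym2.eq_iff] at hab
      rcases hab with ⟨rfl, rfl⟩ | ⟨rfl, rfl⟩ <;> tauto
    · rintro (⟨hx, hy⟩ | ⟨hy, hx⟩)
      · exact ⟨x, y, ⟨hx, hy⟩, rfl⟩
      · exact ⟨y, x, ⟨hy, hx⟩, Sym2.eq_swap⟩
  have hPcard : P.card = A.card * Aᶜ.card := by
    rw [hP, Finset.card_image_of_injOn, Finset.card_product]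
    rintro ⟨x, y⟩ hxy ⟨x', y'⟩ hxy' hh
    simp only [Finset.mem_coe, Finset.mem_product, Finset.mem_compl] at hxy hxy'
    rw [Sym2.eq_iff] at hh
    rcases hh with ⟨rfl, rfl⟩ | ⟨rfl, rfl⟩
    · rfl
    · exact absurd hxy.1 hxy'.2
  have hedges : (Seidel G A).edgeFinset = (G.edgeFinset \ P) ∪ (P \ G.edgeFinset) := by
    ext e
    induction e using Sym2.ind with
    | _ x y =>
      by_cases hne : x = y
      · subst hne
        rw [SimpleGraph.mem_edgeFinset]; simp [hmemP x x, SimpleGraph.mem_edgeFinset, Seidel]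
      · rw [SimpleGraph.mem_edgeFinset]
        simp only [Finset.mem_union, Finset.mem_sdiff, SimpleGraph.mem_edgeFinset,
          SimpleGraph.mem_edgeSet, Seidel, hmemP x y]
        constructor
        · rintro ⟨-, hiff⟩
          by_cases hx : x ∈ A <;> by_cases hy : y ∈ A <;> tauto
        · intro hh
          refine ⟨hne, ?_⟩
          by_cases hx : x ∈ A <;> by_cases hy : y ∈ A <;> tauto
  set X : Finset (Sym2 V) := G.edgeFinset ∩ P with hX
  have hbound : ∀ B : Finset V, (∀ x y : V, s(x, y) ∈ P → x ∈ B ∨ y ∈ B) →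
      4 * X.card ≤ B.card * Fintype.card V := by
    intro B hB
    have hsub : X ⊆ B.biUnion (fun v => G.incidenceFinset v) := by
      intro e he
      induction e using Sym2.ind with
      | _ x y =>
        rw [hX, Finset.mem_inter, SimpleGraph.mem_edgeFinset, SimpleGraph.mem_edgeSet] at he
        rcases hB x y he.2 with hxB | hyB
        · exact Finset.mem_biUnion.mpr ⟨x, hxB, by
            rw [SimpleGraph.mem_incidenceFinset]
            exact ⟨he.1, Sym2.mem_mk_left x y⟩⟩
        · exact Finset.mem_biUnion.mpr ⟨y, hyB, by
            rw [SimpleGraph.mem_incidenceFinset]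
            exact ⟨he.1, Sym2.mem_mk_right x y⟩⟩
    have h1 : X.card ≤ ∑ v ∈ B, G.degree v := by
      calc X.card ≤ (B.biUnion (fun v => G.incidenceFinset v)).card := Finset.card_le_card hsub
        _ ≤ ∑ v ∈ B, (G.incidenceFinset v).card := Finset.card_biUnion_le
        _ = ∑ v ∈ B, G.degree v := by
            simp [SimpleGraph.card_incidenceFinset_eq_degree]
    calc 4 * X.card ≤ 4 * ∑ v ∈ B, G.degree v := by omega
      _ = ∑ v ∈ B, 4 * G.degree v := by rw [Finset.mul_sum]
      _ ≤ ∑ v ∈ B, Fintype.card V := Finset.sum_le_sum (fun v _ => h v)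
      _ = B.card * Fintype.card V := by rw [Finset.sum_const, smul_eq_mul]
  have hA : 4 * X.card ≤ A.card * Fintype.card V := by
    refine hbound A (fun x y hxy => ?_)
    rcases (hmemP x y).1 hxy with ⟨hx, -⟩ | ⟨hy, -⟩
    exacts [Or.inl hx, Or.inr hy]
  have hAc : 4 * X.card ≤ Aᶜ.card * Fintype.card V := by
    refine hbound Aᶜ (fun x y hxy => ?_)
    rcases (hmemP x y).1 hxy with ⟨-, hy⟩ | ⟨-, hx⟩
    · exact Or.inr (Finset.mem_compl.mpr hy)
    · exact Or.inl (Finset.mem_compl.mpr hx)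
  have hn : A.card + Aᶜ.card = Fintype.card V := Finset.card_add_card_compl A
  have key : 2 * X.card ≤ A.card * Aᶜ.card := by
    rcases le_total A.card Aᶜ.card with hab | hab
    · nlinarith [hA, hn, hab]
    · nlinarith [hAc, hn, hab]
  have hc1 : (G.edgeFinset \ P).card + X.card = G.edgeFinset.card := by
    rw [hX]; exact Finset.card_sdiff_add_card_inter _ _
  have hc2 : (P \ G.edgeFinset).card + X.card = P.card := by
    rw [hX, Finset.inter_comm]; exact Finset.card_sdiff_add_card_inter _ _
  have hdisj : Disjoint (G.edgeFinset \ P) (P \ G.edgeFinset) := disjoint_sdiff_sdiff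
  have hScard : (Seidel G A).edgeFinset.card
      = (G.edgeFinset \ P).card + (P \ G.edgeFinset).card := by
    rw [hedges, Finset.card_union_of_disjoint hdisj]
  rw [hScard]
  rw [hPcard] at hc2
  omega
end

section
/- Let G be a connected 3-regular graph on 2n vertices. Let b be the minimum, over all partitions of V(G) into two sets of size n each, of the number of edges crossing the partition, and let c be the maximum, over all partitions of V(G) into two (possibly unbalanced) sets, of the number of non-edges of G crossing the partition (equivalently, edges of the complement of G crossing it). Then b = n² − c. -/
open SimpleGraph Finset

variable {V : Type*}

section Aux
variable [Fintype V] [DecidableEq V]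

def PP (G : SimpleGraph V) [DecidableRel G.Adj] (A : Finset V) : ℕ :=
  ∑ x ∈ A, (G.neighborFinset x \ A).card

lemma PP_eq_double_sum (G : SimpleGraph V) [DecidableRel G.Adj] (A : Finset V) :
    PP G A = ∑ x ∈ A, ∑ y ∈ Aᶜ, if G.Adj x y then 1 else 0 := by
  unfold PP
  refine Finset.sum_congr rfl fun x hx => ?_
  rw [Finset.sum_ite, Finset.sum_const, Finset.sum_const]
  simp only [smul_eq_mul, mul_one, mul_zero, add_zero]
  congr 1
  ext y
  simp [mem_neighborFinset, and_comm]

lemma PP_compl_eq (G : SimpleGraph V) [DecidableRel G.Adj] (A : Finset V) :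
    PP G Aᶜ = PP G A := by
  rw [PP_eq_double_sum, PP_eq_double_sum, compl_compl, Finset.sum_comm]
  refine Finset.sum_congr rfl fun x _ => Finset.sum_congr rfl fun y _ => ?_
  simp [G.adj_comm x y]

lemma PP_add_PP_compl (G : SimpleGraph V) [DecidableRel G.Adj] (A : Finset V) :
    PP G A + PP Gᶜ A = A.card * Aᶜ.card := by
  unfold PP
  rw [← Finset.sum_add_distrib]
  rw [Finset.sum_congr rfl (fun x hx => ?_), Finset.sum_const, smul_eq_mul]
  rw [← Finset.card_union_of_disjoint ?_]
  · congr 1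
    ext y
    by_cases hyx : y = x
    · subst hyx
      simp [Finset.mem_compl, hx]
    · simp only [Finset.mem_union, Finset.mem_sdiff, mem_neighborFinset, Finset.mem_compl,
        compl_adj]
      constructor
      · rintro (⟨_, h⟩ | ⟨_, h⟩) <;> exact h
      · intro h
        by_cases hadj : G.Adj x y
        · exact Or.inl ⟨hadj, h⟩
        · exact Or.inr ⟨⟨fun he => hyx he.symm, hadj⟩, h⟩
  · intro s hs1 hs2 y hy
    have h1 := hs1 hy
    have h2 := hs2 hy
    simp only [Finset.mem_sdiff, mem_neighborFinset, compl_adj] at h1 h2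
    exact absurd h1.1 h2.1.2

lemma PP_insert (G : SimpleGraph V) [DecidableRel G.Adj] (A : Finset V) {v : V} (hv : v ∉ A) :
    PP G (insert v A) + 2 * (G.neighborFinset v ∩ A).card
      = PP G A + G.degree v := by
  unfold PP
  rw [Finset.sum_insert hv]
  have hNv : G.neighborFinset v \ insert v A = G.neighborFinset v \ A := by
    ext y
    simp only [Finset.mem_sdiff, Finset.mem_insert, mem_neighborFinset]
    constructor
    · rintro ⟨h1, h2⟩; exact ⟨h1, fun h => h2 (Or.inr h)⟩
    · rintro ⟨h1, h2⟩
      refine ⟨h1, ?_⟩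
      rintro (rfl | h)
      · exact G.irrefl h1
      · exact h2 h
  have ha : (G.neighborFinset v \ A).card + (G.neighborFinset v ∩ A).card
      = G.degree v := by
    rw [Finset.card_sdiff_add_card_inter, ← G.card_neighborFinset_eq_degree]
  have hb : (∑ x ∈ A, (G.neighborFinset x \ insert v A).card)
        + (G.neighborFinset v ∩ A).card
      = ∑ x ∈ A, (G.neighborFinset x \ A).card := by
    have hd : (G.neighborFinset v ∩ A).card
        = ∑ x ∈ A, if x ∈ G.neighborFinset v then 1 else 0 := by
      rw [Finset.sum_ite, Finset.sum_const, Finset.sum_const]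
      simp only [smul_eq_mul, mul_one, mul_zero, add_zero]
      congr 1
      ext x
      simp [and_comm]
    rw [hd, ← Finset.sum_add_distrib]
    refine Finset.sum_congr rfl fun x hx => ?_
    have hx' : G.neighborFinset x \ insert v A = (G.neighborFinset x \ A).erase v := by
      ext y
      simp only [Finset.mem_sdiff, Finset.mem_insert, Finset.mem_erase]
      tauto
    rw [hx']
    by_cases hmem : x ∈ G.neighborFinset v
    · have hv' : v ∈ G.neighborFinset x \ A := by
        simp only [Finset.mem_sdiff, mem_neighborFinset] at *
        exact ⟨G.adj_symm hmem, hv⟩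
      rw [if_pos hmem, Finset.card_erase_of_mem hv']
      have := Finset.card_pos.mpr ⟨v, hv'⟩
      omega
    · have hv' : v ∉ G.neighborFinset x \ A := by
        simp only [Finset.mem_sdiff, mem_neighborFinset] at *
        intro h
        exact hmem (G.adj_symm h.1)
      rw [if_neg hmem, Finset.erase_eq_of_notMem hv', add_zero]
  rw [hNv]
  omega

lemma eCross_eq_PP (G : SimpleGraph V) [DecidableRel G.Adj] (A : Finset V) :
    eCross G A = PP G A := by
  have h1 : PP G A = ((A ×ˢ Aᶜ).filter fun p => G.Adj p.1 p.2).card := by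
    rw [PP_eq_double_sum, Finset.card_filter, Finset.sum_product]
  rw [h1]
  unfold eCross
  refine (Finset.card_bij (fun p _ => s(p.1, p.2)) ?_ ?_ ?_).symm
  · rintro ⟨x, y⟩ hp
    simp only [Finset.mem_filter, Finset.mem_product, Finset.mem_compl] at hp
    obtain ⟨⟨hx, hy⟩, hadj⟩ := hp
    simp only [Finset.mem_filter, mem_edgeFinset, mem_edgeSet]
    exact ⟨hadj, x, hx, y, hy, rfl⟩
  · rintro ⟨x, y⟩ hp ⟨x', y'⟩ hp' heq
    simp only [Finset.mem_filter, Finset.mem_product, Finset.mem_compl] at hp hp'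
    rw [Sym2.eq_iff] at heq
    rcases heq with ⟨rfl, rfl⟩ | ⟨rfl, rfl⟩
    · rfl
    · exact absurd hp.1.1 hp'.1.2
  · intro e he
    simp only [Finset.mem_filter, mem_edgeFinset, mem_edgeSet] at he
    obtain ⟨hadj, x, hx, y, hy, rfl⟩ := he
    refine ⟨(x, y), ?_, rfl⟩
    simp only [Finset.mem_filter, Finset.mem_product, Finset.mem_compl]
    exact ⟨⟨hx, hy⟩, hadj⟩

omit [Fintype V] [DecidableEq V] in
lemma exists_crossing_adj {G : SimpleGraph V} {A : Finset V} :
    ∀ {u w : V}, G.Walk u w → u ∈ A → w ∉ A → ∃ x ∈ A, ∃ y, y ∉ A ∧ G.Adj x y := by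
  intro u w p
  induction p with
  | nil => intro h1 h2; exact absurd h1 h2
  | @cons a b c hadj p ih =>
    intro ha hw
    by_cases hb : b ∈ A
    · exact ih hb hw
    · exact ⟨a, ha, b, hb, hadj⟩

lemma balance (G : SimpleGraph V) [DecidableRel G.Adj] (hconn : G.Connected)
    (hreg : ∀ v : V, G.degree v = 3) {n b : ℕ} (hn : 2 ≤ n)
    (hcard : Fintype.card V = 2 * n)
    (hb₂ : ∀ A : Finset V, A.card = n → b ≤ PP G A) :
    ∀ k, ∀ A : Finset V, A.card + k = n → b ≤ PP G A + k ^ 2 := by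
  intro k
  induction k with
  | zero =>
    intro A hA
    simpa using hb₂ A (by omega)
  | succ k ih =>
    intro A hA
    have hksq : (k + 1) ^ 2 = k ^ 2 + 2 * k + 1 := by ring
    by_cases hAe : A = ∅
    · subst hAe
      simp only [Finset.card_empty, zero_add] at hA
      have hV : Nonempty V := by
        rw [← Fintype.card_pos_iff]; omega
      obtain ⟨v⟩ := hV
      have h1 : ({v} : Finset V).card + k = n := by
        rw [Finset.card_singleton]; omega
      have h2 := ih {v} h1
      have h3 : PP G {v} = 3 := by
        unfold PP
        rw [Finset.sum_singleton, Finset.sdiff_singleton_eq_erase,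
          Finset.erase_eq_of_notMem (G.notMem_neighborFinset_self v),
          G.card_neighborFinset_eq_degree, hreg]
      have hPP0 : PP G (∅ : Finset V) = 0 := by simp [PP]
      rw [hPP0]
      omega
    · have hAne : A.Nonempty := Finset.nonempty_iff_ne_empty.mpr hAe
      have hAc : Aᶜ.Nonempty := by
        rw [← Finset.card_pos, Finset.card_compl]
        omega
      obtain ⟨u, hu⟩ := hAne
      obtain ⟨w, hw'⟩ := hAc
      have hw : w ∉ A := Finset.mem_compl.mp hw'
      obtain ⟨x, hx, y, hy, hxy⟩ := exists_crossing_adj ((hconn u w).some) hu hw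
      have hd : 1 ≤ (G.neighborFinset y ∩ A).card :=
        Finset.card_pos.mpr ⟨x, by simp [mem_neighborFinset, G.adj_symm hxy, hx]⟩
      have hmove := PP_insert G A hy
      rw [hreg y] at hmove
      have hcardins : (insert y A).card + k = n := by
        rw [Finset.card_insert_of_notMem hy]; omega
      have h4 := ih _ hcardins
      omega

end Aux

theorem min_bisection_add_max_cut_compl [Fintype V] [DecidableEq V]
    (G : SimpleGraph V) [DecidableRel G.Adj] (n b c : ℕ)
    (hconn : G.Connected) (hreg : ∀ v : V, G.degree v = 3)
    (hcard : Fintype.card V = 2 * n)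
    (hb₁ : ∃ A : Finset V, A.card = n ∧ eCross G A = b)
    (hb₂ : ∀ A : Finset V, A.card = n → b ≤ eCross G A)
    (hc₁ : ∃ A : Finset V, eCross Gᶜ A = c)
    (hc₂ : ∀ A : Finset V, eCross Gᶜ A ≤ c) :
    b + c = n ^ 2 := by
  rcases Nat.lt_or_ge n 2 with hn | hn
  · -- degenerate cases n = 0 or n = 1
    interval_cases n
    · -- n = 0 : V is empty
      haveI : IsEmpty V := Fintype.card_eq_zero_iff.mp (by omega)
      obtain ⟨A₀, _, hA₀b⟩ := hb₁
      obtain ⟨A₁, hA₁c⟩ := hc₁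
      have hA₀ : A₀ = ∅ := Finset.eq_empty_of_isEmpty A₀
      have hA₁ : A₁ = ∅ := Finset.eq_empty_of_isEmpty A₁
      rw [eCross_eq_PP] at hA₀b hA₁c
      subst hA₀ hA₁
      simp [PP] at hA₀b hA₁c
      omega
    · -- n = 1 : contradiction with 3-regularity
      exfalso
      have hV : Nonempty V := by rw [← Fintype.card_pos_iff]; omega
      obtain ⟨v⟩ := hV
      have := G.degree_lt_card_verts v
      rw [hreg v, hcard] at this
      omega
  · obtain ⟨A₀, hA₀card, hA₀b⟩ := hb₁
    have hA₀c : A₀ᶜ.card = n := by rw [Finset.card_compl, hcard, hA₀card]; omega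
    have hsum0 : PP G A₀ + PP Gᶜ A₀ = n * n := by
      rw [PP_add_PP_compl, hA₀card, hA₀c]
    have hb_eq : b = PP G A₀ := by rw [← hA₀b, eCross_eq_PP]
    have hcge : PP Gᶜ A₀ ≤ c := by rw [← eCross_eq_PP]; exact hc₂ A₀
    obtain ⟨A₁, hA₁c⟩ := hc₁
    have hc_eq : c = PP Gᶜ A₁ := by rw [← hA₁c, eCross_eq_PP]
    have hA₁le : A₁.card ≤ 2 * n := by
      have := Finset.card_le_univ A₁
      rwa [hcard] at this
    set B := if A₁.card ≤ n then A₁ else A₁ᶜ with hB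
    have hBle : B.card ≤ n := by
      rw [hB]; split_ifs with h
      · exact h
      · rw [Finset.card_compl, hcard]; omega
    have hBc : PP Gᶜ B = PP Gᶜ A₁ := by
      rw [hB]; split_ifs with h
      · rfl
      · exact PP_compl_eq Gᶜ A₁
    set m := B.card with hm
    set k := n - m with hk
    have hmk : m + k = n := by omega
    have hbal := balance G hconn hreg hn hcard
      (fun A hA => by rw [← eCross_eq_PP]; exact hb₂ A hA) k B hmk
    have hBcc : Bᶜ.card = m + 2 * k := by rw [Finset.card_compl, hcard]; omega
    have hsum1 : PP G B + PP Gᶜ B = m * (m + 2 * k) := by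
      rw [PP_add_PP_compl, hBcc]
    have hkey : m * (m + 2 * k) + k ^ 2 = n ^ 2 := by rw [← hmk]; ring
    have hsum2 : PP G B + PP Gᶜ B + k ^ 2 = n ^ 2 := by rw [← hkey, hsum1]
    have hnn : n ^ 2 = n * n := by ring
    have hle : b + c ≤ n ^ 2 := by rw [hc_eq, ← hBc]; omega
    omega
end

section
/- Let G be a connected 3-regular graph on 2n vertices and let (V₁,V₂) be a maximum cut of the complement of G chosen so that ||V₁| − |V₂|| is minimized among maximum cuts. Then |V₁| = |V₂| = n. -/
open SimpleGraph Finset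

variable {V : Type*}

/-- Cross edges counted as ordered pairs from `A` to `Aᶜ`. -/
private def fCross [Fintype V] [DecidableEq V] (H : SimpleGraph V) [DecidableRel H.Adj]
    (A : Finset V) : ℕ :=
  ∑ x ∈ A, ∑ y ∈ Aᶜ, if H.Adj x y then 1 else 0

private lemma eCross_eq_fCross [Fintype V] [DecidableEq V] (H : SimpleGraph V)
    [DecidableRel H.Adj] (A : Finset V) : eCross H A = fCross H A := by
  have h1 : eCross H A = ((A ×ˢ Aᶜ).filter fun p => H.Adj p.1 p.2).card := by
    rw [eCross]
    refine (Finset.card_nbij (fun p => s(p.1, p.2)) ?_ ?_ ?_).symm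
    · rintro ⟨x, y⟩ hp
      simp only [mem_coe, mem_filter, mem_product, mem_compl] at hp
      obtain ⟨⟨hx, hy⟩, hadj⟩ := hp
      simp only [mem_coe, mem_filter, mem_edgeFinset, mem_edgeSet]
      exact ⟨hadj, x, hx, y, hy, rfl⟩
    · rintro ⟨x, y⟩ hp ⟨x', y'⟩ hp' h
      simp only [coe_filter, Set.mem_setOf_eq, mem_product, mem_compl] at hp hp'
      obtain ⟨⟨hx, hy⟩, _⟩ := hp
      obtain ⟨⟨hx', hy'⟩, _⟩ := hp'
      simp only [Sym2.eq_iff] at h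
      rcases h with ⟨rfl, rfl⟩ | ⟨rfl, rfl⟩
      · rfl
      · exact absurd hx' hy
    · intro e he
      simp only [coe_filter, mem_coe, mem_edgeFinset, Set.mem_setOf_eq] at he
      obtain ⟨hE, x, hx, y, hy, rfl⟩ := he
      refine ⟨(x, y), ?_, rfl⟩
      simp only [coe_filter, Set.mem_setOf_eq, mem_product, mem_compl, mem_coe]
      exact ⟨⟨hx, hy⟩, (H.mem_edgeSet).mp hE⟩
  rw [h1, Finset.card_filter, Finset.sum_product]
  rfl

private lemma fCross_compl [Fintype V] [DecidableEq V] (H : SimpleGraph V)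
    [DecidableRel H.Adj] (A : Finset V) : fCross H Aᶜ = fCross H A := by
  unfold fCross
  rw [compl_compl, Finset.sum_comm]
  refine Finset.sum_congr rfl fun x _ => Finset.sum_congr rfl fun y _ => ?_
  exact if_congr (H.adj_comm y x) rfl rfl

/-- Moving a vertex out of `A`: bookkeeping identity. -/
private lemma fCross_erase [Fintype V] [DecidableEq V] (H : SimpleGraph V)
    [DecidableRel H.Adj] (A : Finset V) {v : V} (hv : v ∈ A) :
    fCross H (A.erase v) + (∑ y ∈ Aᶜ, if H.Adj v y then 1 else 0)
      = fCross H A + (∑ x ∈ A.erase v, if H.Adj v x then 1 else 0) := by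
  have hvc : v ∉ Aᶜ := by simp [hv]
  have h1 : fCross H (A.erase v)
      = (∑ x ∈ A.erase v, if H.Adj v x then 1 else 0)
        + ∑ x ∈ A.erase v, ∑ y ∈ Aᶜ, if H.Adj x y then 1 else 0 := by
    unfold fCross
    rw [Finset.compl_erase]
    rw [← Finset.sum_add_distrib]
    refine Finset.sum_congr rfl fun x _ => ?_
    rw [Finset.sum_insert hvc]
    exact congrArg (· + _) (if_congr (H.adj_comm x v) rfl rfl)
  have h2 : fCross H A
      = (∑ y ∈ Aᶜ, if H.Adj v y then 1 else 0)
        + ∑ x ∈ A.erase v, ∑ y ∈ Aᶜ, if H.Adj x y then 1 else 0 := by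
    exact (Finset.add_sum_erase A
      (fun x => ∑ y ∈ Aᶜ, if H.Adj x y then 1 else 0) hv).symm
  omega

private lemma cross_of_walk [DecidableEq V] {G : SimpleGraph V} {A : Finset V} :
    ∀ {u w : V}, G.Walk u w → u ∈ A → w ∉ A → ∃ x ∈ A, ∃ y, y ∉ A ∧ G.Adj x y := by
  intro u w p
  induction p with
  | nil => intro hu hw; exact absurd hu hw
  | @cons u v w h p ih =>
    intro hu hw
    by_cases hvA : v ∈ A
    · exact ih hvA hw
    · exact ⟨u, hu, v, hvA, h⟩

private lemma key [Fintype V] [DecidableEq V]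
    (G : SimpleGraph V) [DecidableRel G.Adj] (n : ℕ)
    (hconn : G.Connected) (hreg : ∀ v : V, G.degree v = 3)
    (hcard : Fintype.card V = 2 * n)
    (A : Finset V)
    (hmax : ∀ B : Finset V, eCross Gᶜ B ≤ eCross Gᶜ A)
    (hbal : ∀ B : Finset V, (∀ C : Finset V, eCross Gᶜ C ≤ eCross Gᶜ B) →
      ((A.card : ℤ) - (Aᶜ.card : ℤ)).natAbs ≤ ((B.card : ℤ) - (Bᶜ.card : ℤ)).natAbs)
    (hlt : Aᶜ.card < A.card) : False := by
  have hab : A.card + Aᶜ.card = 2 * n := by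
    rw [Finset.card_add_card_compl, hcard]
  have main : ∀ v ∈ A,
      2 * (∑ y ∈ Aᶜ, if G.Adj v y then 1 else 0) + A.card ≤ Aᶜ.card + 4 ∧
      (2 * (∑ y ∈ Aᶜ, if G.Adj v y then 1 else 0) + A.card = Aᶜ.card + 4 →
        eCross Gᶜ (A.erase v) = eCross Gᶜ A) := by
    intro v hv
    set cv := ∑ y ∈ Aᶜ, if G.Adj v y then 1 else 0 with hcv
    set dOutC := ∑ y ∈ Aᶜ, if Gᶜ.Adj v y then 1 else 0 with hdOutC
    set dInC := ∑ x ∈ A.erase v, if Gᶜ.Adj v x then 1 else 0 with hdInC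
    set dInG := ∑ x ∈ A.erase v, if G.Adj v x then 1 else 0 with hdInG
    have E1 : fCross Gᶜ (A.erase v) + dOutC = fCross Gᶜ A + dInC :=
      fCross_erase Gᶜ A hv
    have E2 : dOutC + cv = Aᶜ.card := by
      rw [hdOutC, hcv, ← Finset.sum_add_distrib]
      have : ∀ y ∈ Aᶜ,
          ((if Gᶜ.Adj v y then 1 else 0) + (if G.Adj v y then 1 else 0)) = 1 := by
        intro y hy
        have hne : v ≠ y := fun h => (Finset.mem_compl.mp hy) (h ▸ hv)
        by_cases h : G.Adj v y <;> simp [SimpleGraph.compl_adj, hne, h]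
      rw [Finset.sum_congr rfl this, Finset.sum_const, smul_eq_mul, mul_one]
    have E3 : dInC + dInG = (A.erase v).card := by
      rw [hdInC, hdInG, ← Finset.sum_add_distrib]
      have : ∀ x ∈ A.erase v,
          ((if Gᶜ.Adj v x then 1 else 0) + (if G.Adj v x then 1 else 0)) = 1 := by
        intro x hx
        have hne : v ≠ x := fun h => (Finset.ne_of_mem_erase hx) h.symm
        by_cases h : G.Adj v x <;> simp [SimpleGraph.compl_adj, hne, h]
      rw [Finset.sum_congr rfl this, Finset.sum_const, smul_eq_mul, mul_one]
    have hae : (A.erase v).card + 1 = A.card := Finset.card_erase_add_one hv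
    have E4 : cv + dInG = 3 := by
      have hdeg : ∑ y : V, (if G.Adj v y then 1 else 0) = 3 := by
        rw [← Finset.card_filter, ← SimpleGraph.neighborFinset_eq_filter]
        exact hreg v
      have hsplit : (∑ x ∈ A, if G.Adj v x then 1 else 0) + cv = 3 := by
        rw [hcv, Finset.sum_add_sum_compl, hdeg]
      have hA : (∑ x ∈ A, if G.Adj v x then 1 else 0)
          = (if G.Adj v v then 1 else 0) + dInG := by
        rw [hdInG]
        exact (Finset.add_sum_erase A (fun x => if G.Adj v x then 1 else 0) hv).symm
      rw [if_neg (G.irrefl)] at hA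
      omega
    have E5 : eCross Gᶜ (A.erase v) ≤ eCross Gᶜ A := hmax _
    have r1 := eCross_eq_fCross Gᶜ (A.erase v)
    have r2 := eCross_eq_fCross Gᶜ A
    constructor
    · omega
    · intro h; omega
  by_cases hex : ∃ v ∈ A, 1 ≤ ∑ y ∈ Aᶜ, if G.Adj v y then 1 else 0
  · obtain ⟨v, hv, hcvpos⟩ := hex
    obtain ⟨h1, h2⟩ := main v hv
    have heq : eCross Gᶜ (A.erase v) = eCross Gᶜ A := h2 (by omega)
    have hmaxB : ∀ C, eCross Gᶜ C ≤ eCross Gᶜ (A.erase v) := fun C => heq ▸ hmax C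
    have hb := hbal (A.erase v) hmaxB
    have hc1 : (A.erase v).card + 1 = A.card := Finset.card_erase_add_one hv
    have hc2 : (A.erase v).card + (A.erase v)ᶜ.card = 2 * n := by
      rw [Finset.card_add_card_compl, hcard]
    omega
  · push_neg at hex
    have hcv0 : ∀ x ∈ A, ∀ y, y ∉ A → ¬ G.Adj x y := by
      intro x hx y hy hadj
      have h0 : ∑ y ∈ Aᶜ, (if G.Adj x y then 1 else 0) = 0 := by
        have := hex x hx; omega
      have := (Finset.sum_eq_zero_iff.mp h0) y (Finset.mem_compl.mpr hy)
      simp [hadj] at this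
    have hAc : Aᶜ.card = 0 := by
      by_contra hne
      obtain ⟨w, hw⟩ := Finset.card_pos.mp (Nat.pos_of_ne_zero hne)
      have hA : A.Nonempty := Finset.card_pos.mp (by omega)
      obtain ⟨u, hu⟩ := hA
      obtain ⟨x, hx, y, hy, hadj⟩ :=
        cross_of_walk ((hconn.preconnected u w).some) hu (Finset.mem_compl.mp hw)
      exact hcv0 x hx y hy hadj
    have hAe : Aᶜ = ∅ := Finset.card_eq_zero.mp hAc
    have hA0 : eCross Gᶜ A = 0 := by
      rw [eCross_eq_fCross]
      unfold fCross
      rw [hAe]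
      simp
    have hn : n ≤ (univ : Finset V).card := by
      rw [Finset.card_univ, hcard]; omega
    obtain ⟨B, _, hBcard⟩ := Finset.exists_subset_card_eq hn
    have hmaxB : ∀ C, eCross Gᶜ C ≤ eCross Gᶜ B := by
      intro C
      have h1 : eCross Gᶜ C ≤ 0 := hA0 ▸ hmax C
      omega
    have hb := hbal B hmaxB
    have hBc : B.card + Bᶜ.card = 2 * n := by
      rw [Finset.card_add_card_compl, hcard]
    omega

theorem max_cut_balanced [Fintype V] [DecidableEq V]
    (G : SimpleGraph V) [DecidableRel G.Adj] (n : ℕ)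
    (hconn : G.Connected) (hreg : ∀ v : V, G.degree v = 3)
    (hcard : Fintype.card V = 2 * n)
    (A : Finset V)
    (hmax : ∀ B : Finset V, eCross Gᶜ B ≤ eCross Gᶜ A)
    (hbal : ∀ B : Finset V, (∀ C : Finset V, eCross Gᶜ C ≤ eCross Gᶜ B) →
      ((A.card : ℤ) - (Aᶜ.card : ℤ)).natAbs ≤ ((B.card : ℤ) - (Bᶜ.card : ℤ)).natAbs) :
    A.card = n ∧ Aᶜ.card = n := by
  have hsymm : eCross Gᶜ Aᶜ = eCross Gᶜ A := by
    rw [eCross_eq_fCross, eCross_eq_fCross]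
    exact fCross_compl Gᶜ A
  have h1 : ¬ Aᶜ.card < A.card := fun h => key G n hconn hreg hcard A hmax hbal h
  have h2 : ¬ A.card < Aᶜ.card := by
    intro h
    refine key G n hconn hreg hcard Aᶜ (fun B => hsymm ▸ hmax B) ?_ ?_
    · intro B hB
      have hb := hbal B hB
      rw [compl_compl]
      omega
    · rw [compl_compl]; exact h
  have hab : A.card + Aᶜ.card = 2 * n := by
    rw [Finset.card_add_card_compl, hcard]
  omega
end

section
/- Let G be a graph on n vertices, N ≥ n, and let G' be the graph with V(G') = V(G) ∪ Y ∪ Z, |Y| = |Z| = N, and E(G') = E(G) ∪ {yv : y ∈ Y, v ∈ V(G)}. Then G' is switching-minimal if and only if G is switching-minimal. -/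
open SimpleGraph Finset

variable {V : Type*}

/-- The graph `G'` obtained from `G` by adding a set `Y` of `N` vertices adjacent to all
vertices of `G`, and a set `Z` of `N` isolated vertices. -/
def extGraph (G : SimpleGraph V) (N : ℕ) : SimpleGraph (V ⊕ (Fin N ⊕ Fin N)) where
  Adj x y :=
    match x, y with
    | .inl a, .inl b => G.Adj a b
    | .inl _, .inr (.inl _) => True
    | .inr (.inl _), .inl _ => True
    | _, _ => False
  symm := by
    constructor
    rintro (a | i | i) (b | j | j) h <;> simp_all <;> exact h.symm
  loopless := by
    constructor
    rintro (a | i | i) h <;> simp_all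

instance extGraph.decidableAdj (G : SimpleGraph V) [DecidableRel G.Adj] (N : ℕ) :
    DecidableRel (extGraph G N).Adj := fun x y =>
  match x, y with
  | .inl a, .inl b => inferInstanceAs (Decidable (G.Adj a b))
  | .inl _, .inr (.inl _) => inferInstanceAs (Decidable True)
  | .inl _, .inr (.inr _) => inferInstanceAs (Decidable False)
  | .inr (.inl _), .inl _ => inferInstanceAs (Decidable True)
  | .inr (.inl _), .inr (.inl _) => inferInstanceAs (Decidable False)
  | .inr (.inl _), .inr (.inr _) => inferInstanceAs (Decidable False)
  | .inr (.inr _), .inl _ => inferInstanceAs (Decidable False)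
  | .inr (.inr _), .inr (.inl _) => inferInstanceAs (Decidable False)
  | .inr (.inr _), .inr (.inr _) => inferInstanceAs (Decidable False)

def pcount [Fintype V] [DecidableEq V] (G : SimpleGraph V) [DecidableRel G.Adj]
    (A : Finset V) : ℕ :=
  #(univ.filter fun p : V × V => G.Adj p.1 p.2 ∧ (p.1 ∈ A ↔ p.2 ∉ A))

lemma seidel_count [Fintype V] [DecidableEq V] (G : SimpleGraph V) [DecidableRel G.Adj]
    (A : Finset V) :
    2 * #(Seidel G A).edgeFinset + 2 * pcount G A = 2 * #G.edgeFinset + #A * #Aᶜ + #A * #Aᶜ := by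
  have hcr : ∀ a b : V, (a ∈ A ↔ b ∉ A) → a ≠ b := by
    rintro a b h rfl; tauto
  have hY : #(univ.filter fun p : V × V => (Seidel G A).Adj p.1 p.2)
      = #(univ.filter fun p : V × V => ¬ G.Adj p.1 p.2 ∧ (p.1 ∈ A ↔ p.2 ∉ A))
      + #(univ.filter fun p : V × V => G.Adj p.1 p.2 ∧ ¬ (p.1 ∈ A ↔ p.2 ∉ A)) := by
    rw [← card_filter_add_card_filter_not
      (p := fun p : V × V => (p.1 ∈ A ↔ p.2 ∉ A)), filter_filter, filter_filter]
    congr 1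
    · apply congrArg; apply filter_congr; rintro ⟨a, b⟩ _
      show (a ≠ b ∧ (G.Adj a b ↔ (a ∈ A ↔ b ∈ A))) ∧ _ ↔ _
      have := hcr a b
      constructor
      · rintro ⟨⟨hne, hiff⟩, hc⟩; exact ⟨fun ha => by tauto, hc⟩
      · rintro ⟨hna, hc⟩; exact ⟨⟨this hc, by tauto⟩, hc⟩
    · apply congrArg; apply filter_congr; rintro ⟨a, b⟩ _
      show (a ≠ b ∧ (G.Adj a b ↔ (a ∈ A ↔ b ∈ A))) ∧ _ ↔ _
      constructor
      · rintro ⟨⟨hne, hiff⟩, hc⟩; exact ⟨by tauto, hc⟩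
      · rintro ⟨ha, hc⟩; exact ⟨⟨G.ne_of_adj ha, by tauto⟩, hc⟩
  have hX : #(univ.filter fun p : V × V => G.Adj p.1 p.2)
      = pcount G A
      + #(univ.filter fun p : V × V => G.Adj p.1 p.2 ∧ ¬ (p.1 ∈ A ↔ p.2 ∉ A)) := by
    rw [← card_filter_add_card_filter_not
      (p := fun p : V × V => (p.1 ∈ A ↔ p.2 ∉ A)) (s := univ.filter fun p : V × V => G.Adj p.1 p.2),
      filter_filter, filter_filter]
    congr 1
  have hC : #(univ.filter fun p : V × V => (p.1 ∈ A ↔ p.2 ∉ A))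
      = pcount G A
      + #(univ.filter fun p : V × V => ¬ G.Adj p.1 p.2 ∧ (p.1 ∈ A ↔ p.2 ∉ A)) := by
    rw [← card_filter_add_card_filter_not
      (p := fun p : V × V => G.Adj p.1 p.2)
      (s := univ.filter fun p : V × V => (p.1 ∈ A ↔ p.2 ∉ A)),
      filter_filter, filter_filter]
    congr 1
    · unfold pcount; apply congrArg; apply filter_congr; rintro ⟨a, b⟩ _; tauto
    · apply congrArg; apply filter_congr; rintro ⟨a, b⟩ _; tauto
  have hCval : #(univ.filter fun p : V × V => (p.1 ∈ A ↔ p.2 ∉ A)) = #A * #Aᶜ + #A * #Aᶜ := by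
    have : (univ.filter fun p : V × V => (p.1 ∈ A ↔ p.2 ∉ A)) = A ×ˢ Aᶜ ∪ Aᶜ ×ˢ A := by
      ext ⟨a, b⟩
      simp only [mem_filter, mem_univ, true_and, mem_union, mem_product, mem_compl]
      tauto
    rw [this, card_union_of_disjoint, card_product, card_product, card_compl]
    · ring
    · rw [Finset.disjoint_left]
      rintro ⟨a, b⟩ h1 h2
      simp only [mem_product, mem_compl] at h1 h2
      tauto
  have tmG : 2 * #G.edgeFinset = #(univ.filter fun p : V × V => G.Adj p.1 p.2) := by
    rw [two_mul_card_edgeFinset]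
  have tmS : 2 * #(Seidel G A).edgeFinset
      = #(univ.filter fun p : V × V => (Seidel G A).Adj p.1 p.2) := by
    rw [two_mul_card_edgeFinset]
  omega

lemma switchMinimal_iff_pcount [Fintype V] [DecidableEq V] (G : SimpleGraph V)
    [DecidableRel G.Adj] : SwitchMinimal G ↔ ∀ A : Finset V, pcount G A ≤ #A * #Aᶜ := by
  constructor
  · intro h A
    have h1 := seidel_count G A
    have h2 := h A
    omega
  · intro h A
    have h1 := seidel_count G A
    have h2 := h A
    omega

lemma crossCard {α β : Type*} [Fintype α] [DecidableEq α] [Fintype β] [DecidableEq β]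
    (P : Finset α) (Q : Finset β) :
    #(univ.filter fun p : α × β => (p.1 ∈ P ↔ p.2 ∉ Q)) = #P * #Qᶜ + #Pᶜ * #Q := by
  have : (univ.filter fun p : α × β => (p.1 ∈ P ↔ p.2 ∉ Q)) = P ×ˢ Qᶜ ∪ Pᶜ ×ˢ Q := by
    ext ⟨a, b⟩
    simp only [mem_filter, mem_univ, true_and, mem_union, mem_product, mem_compl]
    tauto
  rw [this, card_union_of_disjoint, card_product, card_product]
  rw [Finset.disjoint_left]
  rintro ⟨a, b⟩ h1 h2
  simp only [mem_product, mem_compl] at h1 h2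
  tauto

lemma card_ext {W₁ W₂ : Type*} [Fintype V] [DecidableEq V] [Fintype W₁] [DecidableEq W₁]
    [Fintype W₂] [DecidableEq W₂] (A' : Finset (V ⊕ (W₁ ⊕ W₂))) :
    A'.card = #(univ.filter fun v : V => Sum.inl v ∈ A')
      + #(univ.filter fun i : W₁ => Sum.inr (Sum.inl i) ∈ A')
      + #(univ.filter fun i : W₂ => Sum.inr (Sum.inr i) ∈ A') := by
  have h : A' = univ.filter (· ∈ A') := by ext x; simp
  rw [h, card_filter, card_filter, card_filter, card_filter, Fintype.sum_sum_type,
    Fintype.sum_sum_type]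
  simp [add_assoc]

lemma pcount_ext [Fintype V] [DecidableEq V] (G : SimpleGraph V) [DecidableRel G.Adj] (N : ℕ)
    (A' : Finset (V ⊕ (Fin N ⊕ Fin N))) :
    pcount (extGraph G N) A' = pcount G (univ.filter fun v => Sum.inl v ∈ A')
      + #(univ.filter fun p : V × Fin N => (Sum.inl p.1 ∈ A' ↔ Sum.inr (Sum.inl p.2) ∉ A'))
      + #(univ.filter fun p : Fin N × V => (Sum.inr (Sum.inl p.1) ∈ A' ↔ Sum.inl p.2 ∉ A')) := by
  unfold pcount
  rw [card_filter, card_filter, card_filter, card_filter, Fintype.sum_prod_type,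
    Fintype.sum_prod_type, Fintype.sum_prod_type, Fintype.sum_prod_type,
    Fintype.sum_sum_type]
  simp only [Fintype.sum_sum_type, extGraph, mem_filter, mem_univ, true_and]
  simp only [true_and, false_and, if_false, if_neg, Finset.sum_const_zero,
    Finset.sum_add_distrib, add_zero]
  congr

lemma arith (n N b b' s s' t t' : ℕ) (hb : b + b' = n) (hs : s + s' = N) (ht : t + t' = N)
    (hn : n ≤ N) :
    s * b' + s' * b ≤ b * t' + t * b' + s * s' + s * t' + t * s' + t * t' := by
  rcases Nat.eq_zero_or_pos N with h0 | hpos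
  · obtain ⟨rfl, rfl, rfl, rfl, rfl⟩ : s = 0 ∧ s' = 0 ∧ t = 0 ∧ t' = 0 ∧ b' = 0 := by omega
    simp
  · apply Nat.le_of_mul_le_mul_left _ hpos
    zify at hb hs ht hn ⊢
    have e1 : (s' : ℤ) = N - s := by linarith
    have e2 : (t' : ℤ) = N - t := by linarith
    have e3 : (b' : ℤ) = n - b := by linarith
    rw [e1, e2, e3]
    have h1 : (0:ℤ) ≤ ((N:ℤ) - t) * (s * (2*b + ((N:ℤ) - n) + ((N:ℤ) - s))) := by
      apply mul_nonneg
      · linarith [Int.ofNat_nonneg t']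
      · apply mul_nonneg (Int.ofNat_nonneg s)
        linarith [Int.ofNat_nonneg b, Int.ofNat_nonneg s']
    have h2 : (0:ℤ) ≤ (t:ℤ) * (((N:ℤ) - s) * (2*((n:ℤ)-b) + ((N:ℤ) - n) + s)) := by
      apply mul_nonneg (Int.ofNat_nonneg t)
      apply mul_nonneg
      · linarith [Int.ofNat_nonneg s, hs]
      · linarith [Int.ofNat_nonneg s, Int.ofNat_nonneg b', e3]
    have h3 : (0:ℤ) ≤ (N:ℤ) * t * ((N:ℤ) - t) := by
      apply mul_nonneg (mul_nonneg (Int.ofNat_nonneg N) (Int.ofNat_nonneg t))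
      linarith [Int.ofNat_nonneg t']
    nlinarith [h1, h2, h3]

theorem extGraph_switchMinimal_iff [Fintype V] [DecidableEq V]
    (G : SimpleGraph V) [DecidableRel G.Adj] (N : ℕ) (hN : Fintype.card V ≤ N) :
    SwitchMinimal (extGraph G N) ↔ SwitchMinimal G := by
  rw [switchMinimal_iff_pcount, switchMinimal_iff_pcount]
  constructor
  · intro h B
    set A' : Finset (V ⊕ (Fin N ⊕ Fin N)) := B.image Sum.inl with hA'
    have hB : (univ.filter fun v : V => Sum.inl v ∈ A') = B := by
      ext v; simp [hA']
    have hS : (univ.filter fun i : Fin N => Sum.inr (Sum.inl i) ∈ A') = (∅ : Finset (Fin N)) := by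
      ext i; simp [hA']
    have hT : (univ.filter fun i : Fin N => Sum.inr (Sum.inr i) ∈ A') = (∅ : Finset (Fin N)) := by
      ext i; simp [hA']
    have h1 := h A'
    rw [pcount_ext] at h1
    have hc1 : #(univ.filter fun p : V × Fin N =>
        (Sum.inl p.1 ∈ A' ↔ Sum.inr (Sum.inl p.2) ∉ A')) = #B * N := by
      rw [show (univ.filter fun p : V × Fin N =>
          (Sum.inl p.1 ∈ A' ↔ Sum.inr (Sum.inl p.2) ∉ A'))
          = univ.filter fun p : V × Fin N => (p.1 ∈ B ↔ p.2 ∉ (∅ : Finset (Fin N))) from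
        filter_congr (by rintro ⟨a, b⟩ _; rw [← hB, ← hS]; simp), crossCard]
      simp
    have hc2 : #(univ.filter fun p : Fin N × V =>
        (Sum.inr (Sum.inl p.1) ∈ A' ↔ Sum.inl p.2 ∉ A')) = N * #B := by
      rw [show (univ.filter fun p : Fin N × V =>
          (Sum.inr (Sum.inl p.1) ∈ A' ↔ Sum.inl p.2 ∉ A'))
          = univ.filter fun p : Fin N × V => (p.1 ∈ (∅ : Finset (Fin N)) ↔ p.2 ∉ B) from
        filter_congr (by rintro ⟨a, b⟩ _; rw [← hB, ← hS]; simp), crossCard]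
      simp
    have hcard : #A' = #B := by rw [card_ext A', hB, hS, hT]; simp
    have hcardc : #A'ᶜ = #Bᶜ + N + N := by
      rw [card_ext A'ᶜ]
      have e1 : (univ.filter fun v : V => Sum.inl v ∈ A'ᶜ) = Bᶜ := by
        ext v; rw [← hB]; simp
      have e2 : (univ.filter fun i : Fin N => Sum.inr (Sum.inl i) ∈ A'ᶜ) = univ := by
        ext i; have := hS; rw [eq_empty_iff_forall_notMem] at this; simpa using this i
      have e3 : (univ.filter fun i : Fin N => Sum.inr (Sum.inr i) ∈ A'ᶜ) = univ := by
        ext i; have := hT; rw [eq_empty_iff_forall_notMem] at this; simpa using this i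
      rw [e1, e2, e3, card_univ, Fintype.card_fin]
    rw [hB, hc1, hc2, hcard, hcardc] at h1
    nlinarith [h1]
  · intro h A'
    set B := univ.filter fun v : V => Sum.inl v ∈ A' with hB
    set S := univ.filter fun i : Fin N => Sum.inr (Sum.inl i) ∈ A' with hS
    set T := univ.filter fun i : Fin N => Sum.inr (Sum.inr i) ∈ A' with hT
    have h1 := h B
    have hc1 : #(univ.filter fun p : V × Fin N =>
        (Sum.inl p.1 ∈ A' ↔ Sum.inr (Sum.inl p.2) ∉ A')) = #B * #Sᶜ + #Bᶜ * #S := by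
      rw [show (univ.filter fun p : V × Fin N =>
          (Sum.inl p.1 ∈ A' ↔ Sum.inr (Sum.inl p.2) ∉ A'))
          = univ.filter fun p : V × Fin N => (p.1 ∈ B ↔ p.2 ∉ S) from
        filter_congr (by rintro ⟨a, b⟩ _; simp [hB, hS]), crossCard]
    have hc2 : #(univ.filter fun p : Fin N × V =>
        (Sum.inr (Sum.inl p.1) ∈ A' ↔ Sum.inl p.2 ∉ A')) = #S * #Bᶜ + #Sᶜ * #B := by
      rw [show (univ.filter fun p : Fin N × V =>
          (Sum.inr (Sum.inl p.1) ∈ A' ↔ Sum.inl p.2 ∉ A'))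
          = univ.filter fun p : Fin N × V => (p.1 ∈ S ↔ p.2 ∉ B) from
        filter_congr (by rintro ⟨a, b⟩ _; simp [hB, hS]), crossCard]
    have hcard : #A' = #B + #S + #T := card_ext A'
    have hcardc : #A'ᶜ = #Bᶜ + #Sᶜ + #Tᶜ := by
      rw [card_ext A'ᶜ]
      congr 1
      · congr 1
        · apply congrArg; ext v; simp [hB]
        · apply congrArg; ext i; simp [hS]
      · apply congrArg; ext i; simp [hT]
    have hbb : #B + #Bᶜ = Fintype.card V := card_add_card_compl B
    have hss : #S + #Sᶜ = N := by rw [card_add_card_compl]; exact Fintype.card_fin N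
    have htt : #T + #Tᶜ = N := by rw [card_add_card_compl]; exact Fintype.card_fin N
    have ha := arith (Fintype.card V) N (#B) (#Bᶜ) (#S) (#Sᶜ) (#T) (#Tᶜ) hbb hss htt hN
    rw [pcount_ext, hc1, hc2, hcard, hcardc]
    nlinarith [h1, ha]
end

section
/- Let G be a graph on n vertices, N ≥ n, k an integer, and let G' be the graph with V(G') = V(G) ∪ Y ∪ Z, |Y| = |Z| = N, and E(G') = E(G) ∪ {yv : y ∈ Y, v ∈ V(G)}. Then G' is (≤ k + nN)-switchable if and only if G is (≤ k)-switchable. -/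
open SimpleGraph Finset

variable {V : Type*}

/-- `G` is `(≤ k)`-switchable if some switch of `G` has at most `k` edges. -/
def SwitchableLE [Fintype V] [DecidableEq V] (G : SimpleGraph V) [DecidableRel G.Adj] (k : ℕ) : Prop :=
  ∃ A : Finset V, (Seidel G A).edgeFinset.card ≤ k


section Aux

lemma extGraph_adj_ll (G : SimpleGraph V) (N : ℕ) (a b : V) :
    (extGraph G N).Adj (Sum.inl a) (Sum.inl b) ↔ G.Adj a b := Iff.rfl

lemma extGraph_adj_ly (G : SimpleGraph V) (N : ℕ) (a : V) (j : Fin N) :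
    (extGraph G N).Adj (Sum.inl a) (Sum.inr (Sum.inl j)) ↔ True := Iff.rfl

lemma extGraph_adj_lz (G : SimpleGraph V) (N : ℕ) (a : V) (j : Fin N) :
    (extGraph G N).Adj (Sum.inl a) (Sum.inr (Sum.inr j)) ↔ False := Iff.rfl

lemma extGraph_adj_yl (G : SimpleGraph V) (N : ℕ) (a : V) (j : Fin N) :
    (extGraph G N).Adj (Sum.inr (Sum.inl j)) (Sum.inl a) ↔ True := Iff.rfl

lemma extGraph_adj_zl (G : SimpleGraph V) (N : ℕ) (a : V) (j : Fin N) :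
    (extGraph G N).Adj (Sum.inr (Sum.inr j)) (Sum.inl a) ↔ False := Iff.rfl

lemma extGraph_adj_yy (G : SimpleGraph V) (N : ℕ) (i j : Fin N) :
    (extGraph G N).Adj (Sum.inr (Sum.inl i)) (Sum.inr (Sum.inl j)) ↔ False := Iff.rfl

lemma extGraph_adj_yz (G : SimpleGraph V) (N : ℕ) (i j : Fin N) :
    (extGraph G N).Adj (Sum.inr (Sum.inl i)) (Sum.inr (Sum.inr j)) ↔ False := Iff.rfl

lemma extGraph_adj_zy (G : SimpleGraph V) (N : ℕ) (i j : Fin N) :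
    (extGraph G N).Adj (Sum.inr (Sum.inr i)) (Sum.inr (Sum.inl j)) ↔ False := Iff.rfl

lemma extGraph_adj_zz (G : SimpleGraph V) (N : ℕ) (i j : Fin N) :
    (extGraph G N).Adj (Sum.inr (Sum.inr i)) (Sum.inr (Sum.inr j)) ↔ False := Iff.rfl

lemma Seidel_adj (G : SimpleGraph V) (A : Finset V) (x y : V) :
    (Seidel G A).Adj x y ↔ x ≠ y ∧ (G.Adj x y ↔ (x ∈ A ↔ y ∈ A)) := Iff.rfl

variable {α β : Type*} [Fintype α] [Fintype β] [DecidableEq α] [DecidableEq β]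

lemma sum_ite_pred (P : α → Prop) [DecidablePred P] (c d : ℕ) :
    ∑ a : α, (if P a then c else d)
      = (univ.filter P).card * c + (Fintype.card α - (univ.filter P).card) * d := by
  rw [Finset.sum_ite, Finset.sum_const, Finset.sum_const, Finset.filter_not,
    Finset.card_sdiff_of_subset (Finset.filter_subset _ _)]
  simp [Finset.card_univ, mul_comm]

lemma sum_sum_iff (P : α → Prop) (Q : β → Prop) [DecidablePred P] [DecidablePred Q] :
    ∑ a : α, ∑ b : β, (if (P a ↔ Q b) then 1 else 0)
      = (univ.filter P).card * (univ.filter Q).card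
        + (Fintype.card α - (univ.filter P).card)
          * (Fintype.card β - (univ.filter Q).card) := by
  have h : ∀ a : α, (∑ b : β, (if (P a ↔ Q b) then 1 else 0))
      = if P a then (univ.filter Q).card else (Fintype.card β - (univ.filter Q).card) := by
    intro a
    by_cases hp : P a
    · simp only [hp, true_iff, if_pos hp]
      simpa using sum_ite_pred Q 1 0
    · simp only [hp, false_iff, if_neg hp]
      have := sum_ite_pred (fun b => ¬ Q b) 1 0
      simp only [mul_one, mul_zero, add_zero] at this ⊢
      rw [this, Finset.filter_not, Finset.card_sdiff_of_subset (Finset.filter_subset _ _), Finset.card_univ]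
      simp
  rw [Finset.sum_congr rfl (fun a _ => h a)]
  simpa using sum_ite_pred P ((univ.filter Q).card) (Fintype.card β - (univ.filter Q).card)

lemma sum_sum_xor (P : α → Prop) (Q : β → Prop) [DecidablePred P] [DecidablePred Q] :
    ∑ a : α, ∑ b : β, (if ¬(P a ↔ Q b) then 1 else 0)
      = (univ.filter P).card * (Fintype.card β - (univ.filter Q).card)
        + (Fintype.card α - (univ.filter P).card) * (univ.filter Q).card := by
  have h : ∀ a b, (¬(P a ↔ Q b)) ↔ (P a ↔ ¬ Q b) := by tauto
  calc ∑ a : α, ∑ b : β, (if ¬(P a ↔ Q b) then 1 else 0)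
      = ∑ a : α, ∑ b : β, (if (P a ↔ ¬ Q b) then 1 else 0) := by
        refine Finset.sum_congr rfl fun a _ => Finset.sum_congr rfl fun b _ => ?_
        rw [if_congr (h a b) rfl rfl]
    _ = _ := by
        rw [sum_sum_iff P (fun b => ¬ Q b), Finset.filter_not,
          Finset.card_sdiff_of_subset (Finset.filter_subset _ _), Finset.card_univ]
        have hq := Finset.card_filter_le (univ : Finset β) Q
        rw [Finset.card_univ] at hq
        rw [Nat.sub_sub_self hq]

lemma sum_sum_ne_xor (Q : α → Prop) [DecidablePred Q] :
    ∑ i : α, ∑ j : α, (if ¬ i = j ∧ ¬(Q i ↔ Q j) then 1 else 0)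
      = (univ.filter Q).card * (Fintype.card α - (univ.filter Q).card)
        + (Fintype.card α - (univ.filter Q).card) * (univ.filter Q).card := by
  rw [← sum_sum_xor Q Q]
  refine Finset.sum_congr rfl fun i _ => Finset.sum_congr rfl fun j _ => ?_
  refine if_congr ⟨fun h => h.2, fun hc => ⟨fun he => hc (iff_of_eq (congrArg Q he)), hc⟩⟩ rfl rfl

end Aux

lemma ext_count [Fintype V] [DecidableEq V] (G : SimpleGraph V) [DecidableRel G.Adj]
    (N : ℕ) (A' : Finset (V ⊕ (Fin N ⊕ Fin N))) :
    2 * (Seidel (extGraph G N) A').edgeFinset.card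
      = 2 * (Seidel G (univ.filter fun v => Sum.inl v ∈ A')).edgeFinset.card
        + 2 * ((univ.filter fun v : V => Sum.inl v ∈ A').card
                * (univ.filter fun j : Fin N => Sum.inr (Sum.inl j) ∈ A').card
            + (Fintype.card V - (univ.filter fun v : V => Sum.inl v ∈ A').card)
                * (N - (univ.filter fun j : Fin N => Sum.inr (Sum.inl j) ∈ A').card)
            + (univ.filter fun v : V => Sum.inl v ∈ A').card
                * (N - (univ.filter fun j : Fin N => Sum.inr (Sum.inr j) ∈ A').card)
            + (Fintype.card V - (univ.filter fun v : V => Sum.inl v ∈ A').card)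
                * (univ.filter fun j : Fin N => Sum.inr (Sum.inr j) ∈ A').card
            + (univ.filter fun j : Fin N => Sum.inr (Sum.inl j) ∈ A').card
                * (N - (univ.filter fun j : Fin N => Sum.inr (Sum.inl j) ∈ A').card)
            + (univ.filter fun j : Fin N => Sum.inr (Sum.inr j) ∈ A').card
                * (N - (univ.filter fun j : Fin N => Sum.inr (Sum.inr j) ∈ A').card)
            + (univ.filter fun j : Fin N => Sum.inr (Sum.inl j) ∈ A').card
                * (N - (univ.filter fun j : Fin N => Sum.inr (Sum.inr j) ∈ A').card)
            + (N - (univ.filter fun j : Fin N => Sum.inr (Sum.inl j) ∈ A').card)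
                * (univ.filter fun j : Fin N => Sum.inr (Sum.inr j) ∈ A').card) := by
  rw [SimpleGraph.two_mul_card_edgeFinset, Finset.card_filter, Fintype.sum_prod_type]
  simp only [Fintype.sum_sum_type]
  simp only [Seidel_adj, extGraph_adj_ll, extGraph_adj_ly, extGraph_adj_lz, extGraph_adj_yl,
    extGraph_adj_zl, extGraph_adj_yy, extGraph_adj_yz, extGraph_adj_zy, extGraph_adj_zz,
    ne_eq, Sum.inl.injEq, Sum.inr.injEq, reduceCtorEq, not_false_eq_true, true_and,
    true_iff, false_iff]
  simp only [Finset.sum_add_distrib]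
  have h1 : (∑ x : V, ∑ x_1 : V,
        if ¬x = x_1 ∧ (G.Adj x x_1 ↔ (Sum.inl x ∈ A' ↔ Sum.inl x_1 ∈ A')) then 1 else 0)
      = 2 * (Seidel G (Finset.filter (fun v => Sum.inl v ∈ A') Finset.univ)).edgeFinset.card := by
    rw [SimpleGraph.two_mul_card_edgeFinset, Finset.card_filter, Fintype.sum_prod_type]
    simp only [Seidel_adj, Finset.mem_filter, Finset.mem_univ, true_and, ne_eq]
  have h2 : (∑ x : V, ∑ x_1 : Fin N,
        if Sum.inl x ∈ A' ↔ Sum.inr (Sum.inl x_1) ∈ A' then 1 else 0)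
      = (Finset.filter (fun v : V => Sum.inl v ∈ A') Finset.univ).card
          * (Finset.filter (fun j : Fin N => Sum.inr (Sum.inl j) ∈ A') Finset.univ).card
        + (Fintype.card V - (Finset.filter (fun v : V => Sum.inl v ∈ A') Finset.univ).card)
          * (N - (Finset.filter (fun j : Fin N => Sum.inr (Sum.inl j) ∈ A') Finset.univ).card) := by
    simpa using sum_sum_iff (fun v : V => Sum.inl v ∈ A') (fun j : Fin N => Sum.inr (Sum.inl j) ∈ A')
  have h3 : (∑ x : V, ∑ x_1 : Fin N,
        if ¬(Sum.inl x ∈ A' ↔ Sum.inr (Sum.inr x_1) ∈ A') then 1 else 0)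
      = (Finset.filter (fun v : V => Sum.inl v ∈ A') Finset.univ).card
          * (N - (Finset.filter (fun j : Fin N => Sum.inr (Sum.inr j) ∈ A') Finset.univ).card)
        + (Fintype.card V - (Finset.filter (fun v : V => Sum.inl v ∈ A') Finset.univ).card)
          * (Finset.filter (fun j : Fin N => Sum.inr (Sum.inr j) ∈ A') Finset.univ).card := by
    simpa using sum_sum_xor (fun v : V => Sum.inl v ∈ A') (fun j : Fin N => Sum.inr (Sum.inr j) ∈ A')
  have h4 : (∑ x : Fin N, ∑ x_1 : V,
        if Sum.inr (Sum.inl x) ∈ A' ↔ Sum.inl x_1 ∈ A' then 1 else 0)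
      = (Finset.filter (fun j : Fin N => Sum.inr (Sum.inl j) ∈ A') Finset.univ).card
          * (Finset.filter (fun v : V => Sum.inl v ∈ A') Finset.univ).card
        + (N - (Finset.filter (fun j : Fin N => Sum.inr (Sum.inl j) ∈ A') Finset.univ).card)
          * (Fintype.card V - (Finset.filter (fun v : V => Sum.inl v ∈ A') Finset.univ).card) := by
    simpa using sum_sum_iff (fun j : Fin N => Sum.inr (Sum.inl j) ∈ A') (fun v : V => Sum.inl v ∈ A')
  have h5 : (∑ x : Fin N, ∑ x_1 : Fin N,
        if ¬x = x_1 ∧ ¬(Sum.inr (Sum.inl x) ∈ A' ↔ Sum.inr (Sum.inl x_1) ∈ A') then 1 else 0)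
      = (Finset.filter (fun j : Fin N => Sum.inr (Sum.inl j) ∈ A') Finset.univ).card
          * (N - (Finset.filter (fun j : Fin N => Sum.inr (Sum.inl j) ∈ A') Finset.univ).card)
        + (N - (Finset.filter (fun j : Fin N => Sum.inr (Sum.inl j) ∈ A') Finset.univ).card)
          * (Finset.filter (fun j : Fin N => Sum.inr (Sum.inl j) ∈ A') Finset.univ).card := by
    simpa using sum_sum_ne_xor (fun j : Fin N => Sum.inr (Sum.inl j) ∈ A')
  have h6 : (∑ x : Fin N, ∑ x_1 : Fin N,
        if ¬(Sum.inr (Sum.inl x) ∈ A' ↔ Sum.inr (Sum.inr x_1) ∈ A') then 1 else 0)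
      = (Finset.filter (fun j : Fin N => Sum.inr (Sum.inl j) ∈ A') Finset.univ).card
          * (N - (Finset.filter (fun j : Fin N => Sum.inr (Sum.inr j) ∈ A') Finset.univ).card)
        + (N - (Finset.filter (fun j : Fin N => Sum.inr (Sum.inl j) ∈ A') Finset.univ).card)
          * (Finset.filter (fun j : Fin N => Sum.inr (Sum.inr j) ∈ A') Finset.univ).card := by
    simpa using sum_sum_xor (fun j : Fin N => Sum.inr (Sum.inl j) ∈ A') (fun j : Fin N => Sum.inr (Sum.inr j) ∈ A')
  have h7 : (∑ x : Fin N, ∑ x_1 : V,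
        if ¬(Sum.inr (Sum.inr x) ∈ A' ↔ Sum.inl x_1 ∈ A') then 1 else 0)
      = (Finset.filter (fun j : Fin N => Sum.inr (Sum.inr j) ∈ A') Finset.univ).card
          * (Fintype.card V - (Finset.filter (fun v : V => Sum.inl v ∈ A') Finset.univ).card)
        + (N - (Finset.filter (fun j : Fin N => Sum.inr (Sum.inr j) ∈ A') Finset.univ).card)
          * (Finset.filter (fun v : V => Sum.inl v ∈ A') Finset.univ).card := by
    simpa using sum_sum_xor (fun j : Fin N => Sum.inr (Sum.inr j) ∈ A') (fun v : V => Sum.inl v ∈ A')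
  have h8 : (∑ x : Fin N, ∑ x_1 : Fin N,
        if ¬(Sum.inr (Sum.inr x) ∈ A' ↔ Sum.inr (Sum.inl x_1) ∈ A') then 1 else 0)
      = (Finset.filter (fun j : Fin N => Sum.inr (Sum.inr j) ∈ A') Finset.univ).card
          * (N - (Finset.filter (fun j : Fin N => Sum.inr (Sum.inl j) ∈ A') Finset.univ).card)
        + (N - (Finset.filter (fun j : Fin N => Sum.inr (Sum.inr j) ∈ A') Finset.univ).card)
          * (Finset.filter (fun j : Fin N => Sum.inr (Sum.inl j) ∈ A') Finset.univ).card := by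
    simpa using sum_sum_xor (fun j : Fin N => Sum.inr (Sum.inr j) ∈ A') (fun j : Fin N => Sum.inr (Sum.inl j) ∈ A')
  have h9 : (∑ x : Fin N, ∑ x_1 : Fin N,
        if ¬x = x_1 ∧ ¬(Sum.inr (Sum.inr x) ∈ A' ↔ Sum.inr (Sum.inr x_1) ∈ A') then 1 else 0)
      = (Finset.filter (fun j : Fin N => Sum.inr (Sum.inr j) ∈ A') Finset.univ).card
          * (N - (Finset.filter (fun j : Fin N => Sum.inr (Sum.inr j) ∈ A') Finset.univ).card)
        + (N - (Finset.filter (fun j : Fin N => Sum.inr (Sum.inr j) ∈ A') Finset.univ).card)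
          * (Finset.filter (fun j : Fin N => Sum.inr (Sum.inr j) ∈ A') Finset.univ).card := by
    simpa using sum_sum_ne_xor (fun j : Fin N => Sum.inr (Sum.inr j) ∈ A')
  rw [h1, h2, h3, h4, h5, h6, h7, h8, h9]
  ring

lemma int_ineq (p p' y y' z z' : ℤ) (hp : 0 ≤ p) (hp' : 0 ≤ p') (hy : 0 ≤ y) (hy' : 0 ≤ y')
    (hz : 0 ≤ z) (hz' : 0 ≤ z') (hn : p + p' ≤ y + y') (hNz : y + y' = z + z') :
    (p + p') * (y + y') ≤ p*y + p'*y' + p*z' + p'*z + y*y' + z*z' + y*z' + y'*z := by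
  rcases le_total z y with h | h
  · nlinarith [mul_nonneg (sub_nonneg.2 h) hz', mul_le_mul_of_nonneg_left hn (sub_nonneg.2 h)]
  · nlinarith [mul_nonneg (sub_nonneg.2 h) hy', mul_le_mul_of_nonneg_left hn (sub_nonneg.2 h)]

lemma C_ge (n N p y z : ℕ) (hp : p ≤ n) (hy : y ≤ N) (hz : z ≤ N) (hn : n ≤ N) :
    n * N ≤ p*y + (n-p)*(N-y) + p*(N-z) + (n-p)*z + y*(N-y) + z*(N-z) + y*(N-z) + (N-y)*z := by
  obtain ⟨p', hp'⟩ := Nat.le.dest hp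
  obtain ⟨y', hy'⟩ := Nat.le.dest hy
  obtain ⟨z', hz'⟩ := Nat.le.dest hz
  have e1 : n - p = p' := by omega
  have e2 : N - y = y' := by omega
  have e3 : N - z = z' := by omega
  rw [e1, e2, e3, ← hp', ← hy']
  have := int_ineq (p : ℤ) p' y y' z z' (by positivity) (by positivity) (by positivity)
    (by positivity) (by positivity) (by positivity) (by exact_mod_cast show p + p' ≤ y + y' by omega)
    (by exact_mod_cast show y + y' = z + z' by omega)
  exact_mod_cast this

theorem extGraph_switchableLE_iff [Fintype V] [DecidableEq V]
    (G : SimpleGraph V) [DecidableRel G.Adj] (N k : ℕ) (hN : Fintype.card V ≤ N) :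
    SwitchableLE (extGraph G N) (k + Fintype.card V * N) ↔ SwitchableLE G k := by
  constructor
  · rintro ⟨A', hA'⟩
    refine ⟨Finset.filter (fun v => Sum.inl v ∈ A') Finset.univ, ?_⟩
    have h2 := ext_count G N A'
    have hp : (Finset.filter (fun v : V => Sum.inl v ∈ A') Finset.univ).card ≤ Fintype.card V := by
      simpa using Finset.card_filter_le Finset.univ (fun v : V => Sum.inl v ∈ A')
    have hy : (Finset.filter (fun j : Fin N => Sum.inr (Sum.inl j) ∈ A') Finset.univ).card ≤ N := by
      simpa using Finset.card_filter_le Finset.univ (fun j : Fin N => Sum.inr (Sum.inl j) ∈ A')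
    have hz : (Finset.filter (fun j : Fin N => Sum.inr (Sum.inr j) ∈ A') Finset.univ).card ≤ N := by
      simpa using Finset.card_filter_le Finset.univ (fun j : Fin N => Sum.inr (Sum.inr j) ∈ A')
    have hC := C_ge (Fintype.card V) N
      (Finset.filter (fun v : V => Sum.inl v ∈ A') Finset.univ).card
      (Finset.filter (fun j : Fin N => Sum.inr (Sum.inl j) ∈ A') Finset.univ).card
      (Finset.filter (fun j : Fin N => Sum.inr (Sum.inr j) ∈ A') Finset.univ).card hp hy hz hN
    omega
  · rintro ⟨A, hA⟩
    refine ⟨A.image Sum.inl, ?_⟩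
    have h2 := ext_count G N (A.image Sum.inl)
    have hA1 : (Finset.filter (fun v : V => (Sum.inl v : V ⊕ (Fin N ⊕ Fin N)) ∈ A.image Sum.inl) Finset.univ) = A := by
      ext v; simp
    have hA2 : (Finset.filter (fun j : Fin N => (Sum.inr (Sum.inl j) : V ⊕ (Fin N ⊕ Fin N)) ∈ A.image Sum.inl)
        Finset.univ) = ∅ := by
      ext j; simp
    have hA3 : (Finset.filter (fun j : Fin N => (Sum.inr (Sum.inr j) : V ⊕ (Fin N ⊕ Fin N)) ∈ A.image Sum.inl)
        Finset.univ) = ∅ := by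
      ext j; simp
    rw [hA1, hA2, hA3] at h2
    simp only [Finset.card_empty, Nat.sub_zero, Nat.mul_zero, Nat.zero_mul, Nat.add_zero,
      Nat.zero_add, Nat.mul_one] at h2
    have hc : A.card ≤ Fintype.card V := by
      simpa using Finset.card_le_univ A
    have hmul : (Fintype.card V - A.card) * N + A.card * N = Fintype.card V * N := by
      rw [← Nat.add_mul, Nat.sub_add_cancel hc]
    omega
end
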